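/- Let Q ∈ ℝⁿˣⁿ be symmetric, c ∈ ℝⁿ, let I and J be finite disjoint index sets with centers μ_i ∈ ℝⁿ and radii r_i ≥ 0 for i ∈ I ∪ J, and let a₁, …, a_m ∈ ℝⁿ, b₁, …, b_m ∈ ℝ. Consider (VTRS): minimize xᵀQx + cᵀx over x ∈ ℝⁿ subject to ‖x − μ_i‖ ≤ r_i for i ∈ I, ‖x − μ_j‖ ≥ r_j for j ∈ J, and a_kᵀx ≤ b_k for k = 1, …, m; and its relaxation: minimize xᵀ(Q − λ_min(Q) I_n) x + cᵀx + λ_min(Q) t over (x, t) ∈ ℝⁿ × ℝ subject to t − 2 μ_iᵀx + ‖μ_i‖² ≤ r_i² for i ∈ I, t − 2 μ_jᵀx + ‖μ_j‖² ≥ r_j² for j ∈ J, a_kᵀx ≤ b_k for k = 1, …, m, and xᵀx ≤ t. Suppose the dimension of the span of span{a₁, …, a_m, μ_i (i ∈ I), μ_j (j ∈ J)} ∪ R(Q − λ_min(Q) I_n) is at most n − 1, and the optimal value of the relaxation is > −∞. Then x* is a global minimizer of (VTRS) if and only if (x*, x*ᵀx*) is a global minimizer of the relaxation. -/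

import Mathlib

open Matrix

/-- equivalence of global minimizers of the variant trust region problem
(VTRS), with inside-ball, outside-ball and linear constraints, and its convex
relaxation, under the dimension condition. `lmin` is the smallest eigenvalue of `Q`. -/
private lemma dp_nonneg {n : ℕ} (x : Fin n → ℝ) : 0 ≤ x ⬝ᵥ x :=
  Finset.sum_nonneg fun _ _ => mul_self_nonneg _

private lemma dp_expand {n : ℕ} (x y : Fin n → ℝ) :
    (x - y) ⬝ᵥ (x - y) = x ⬝ᵥ x - 2 * (y ⬝ᵥ x) + y ⬝ᵥ y := by
  simp [sub_dotProduct, dotProduct_sub, dotProduct_comm x y]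
  ring

private lemma sqrt_le_iff_sq {d r : ℝ} (hd : 0 ≤ d) (hr : 0 ≤ r) :
    Real.sqrt d ≤ r ↔ d ≤ r ^ 2 := by
  constructor
  · intro h
    calc d = Real.sqrt d ^ 2 := (Real.sq_sqrt hd).symm
      _ ≤ r ^ 2 := by gcongr
  · intro h
    calc Real.sqrt d ≤ Real.sqrt (r ^ 2) := Real.sqrt_le_sqrt h
      _ = r := Real.sqrt_sq hr

private lemma le_sqrt_iff_sq {d r : ℝ} (hd : 0 ≤ d) (hr : 0 ≤ r) :
    r ≤ Real.sqrt d ↔ r ^ 2 ≤ d :=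
  Real.le_sqrt hr hd

private lemma exists_perp {n : ℕ} (S : Submodule ℝ (Fin n → ℝ))
    (hS : Module.finrank ℝ S < n) :
    ∃ v : Fin n → ℝ, v ≠ 0 ∧ ∀ w ∈ S, w ⬝ᵥ v = 0 := by
  let B : (Fin n → ℝ) →ₗ[ℝ] Module.Dual ℝ (Fin n → ℝ) :=
    { toFun := fun v =>
        { toFun := fun w => w ⬝ᵥ v
          map_add' := fun w₁ w₂ => add_dotProduct w₁ w₂ v
          map_smul' := fun s w => smul_dotProduct s w v }
      map_add' := fun v₁ v₂ => LinearMap.ext fun w => dotProduct_add w v₁ v₂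
      map_smul' := fun s v => LinearMap.ext fun w => dotProduct_smul s w v }
  let T := (S.subtype.dualMap).comp B
  have hker : LinearMap.ker T ≠ ⊥ := by
    intro h
    have h1 := LinearMap.finrank_range_add_finrank_ker T
    rw [h, finrank_bot, add_zero, Module.finrank_fin_fun] at h1
    have h2 : Module.finrank ℝ (LinearMap.range T) ≤ Module.finrank ℝ (Module.Dual ℝ S) :=
      Submodule.finrank_le _
    rw [Subspace.dual_finrank_eq] at h2
    omega
  obtain ⟨v, hv, hv0⟩ := (Submodule.ne_bot_iff _).mp hker
  refine ⟨v, hv0, fun w hw => ?_⟩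
  have := LinearMap.congr_fun (LinearMap.mem_ker.mp hv) ⟨w, hw⟩
  simpa [T, B] using this

theorem stmt12 (n m : ℕ) {ι : Type*} (I J : Finset ι) (hIJ : Disjoint I J)
    (Q : Matrix (Fin n) (Fin n) ℝ) (hQsymm : Q.IsSymm) (lmin : ℝ)
    (hlmin : IsGreatest {c : ℝ | (Q - c • (1 : Matrix (Fin n) (Fin n) ℝ)).PosSemidef} lmin)
    (c : Fin n → ℝ) (μ : ι → Fin n → ℝ) (r : ι → ℝ)
    (hr : ∀ i, (i ∈ I ∨ i ∈ J) → 0 ≤ r i)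
    (a : Fin m → Fin n → ℝ) (b : Fin m → ℝ)
    (hdim : Module.finrank ℝ
      ↥(Submodule.span ℝ (Set.range a ∪ (μ '' ↑I) ∪ (μ '' ↑J)) ⊔
          LinearMap.range (Q - lmin • (1 : Matrix (Fin n) (Fin n) ℝ)).mulVecLin) ≤ n - 1)
    (hval : sInf ((fun q : (Fin n → ℝ) × ℝ =>
        ((q.1 ⬝ᵥ ((Q - lmin • (1 : Matrix (Fin n) (Fin n) ℝ)) *ᵥ q.1) + c ⬝ᵥ q.1
            + lmin * q.2 : ℝ) : EReal)) ''
      {q | (∀ i ∈ I, q.2 - 2 * (μ i ⬝ᵥ q.1) + μ i ⬝ᵥ μ i ≤ (r i) ^ 2) ∧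
           (∀ j ∈ J, (r j) ^ 2 ≤ q.2 - 2 * (μ j ⬝ᵥ q.1) + μ j ⬝ᵥ μ j) ∧
           (∀ k, a k ⬝ᵥ q.1 ≤ b k) ∧ q.1 ⬝ᵥ q.1 ≤ q.2}) ≠ ⊥)
    (xs : Fin n → ℝ) :
    -- `xs` globally solves (VTRS)
    ((((∀ i ∈ I, Real.sqrt ((xs - μ i) ⬝ᵥ (xs - μ i)) ≤ r i) ∧
        (∀ j ∈ J, r j ≤ Real.sqrt ((xs - μ j) ⬝ᵥ (xs - μ j))) ∧
        (∀ k, a k ⬝ᵥ xs ≤ b k)) ∧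
      (∀ x : Fin n → ℝ,
        ((∀ i ∈ I, Real.sqrt ((x - μ i) ⬝ᵥ (x - μ i)) ≤ r i) ∧
          (∀ j ∈ J, r j ≤ Real.sqrt ((x - μ j) ⬝ᵥ (x - μ j))) ∧
          (∀ k, a k ⬝ᵥ x ≤ b k)) →
        xs ⬝ᵥ (Q *ᵥ xs) + c ⬝ᵥ xs ≤ x ⬝ᵥ (Q *ᵥ x) + c ⬝ᵥ x))) ↔
    -- `(xs, xsᵀxs)` globally solves the relaxation
    (((∀ i ∈ I, xs ⬝ᵥ xs - 2 * (μ i ⬝ᵥ xs) + μ i ⬝ᵥ μ i ≤ (r i) ^ 2) ∧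
        (∀ j ∈ J, (r j) ^ 2 ≤ xs ⬝ᵥ xs - 2 * (μ j ⬝ᵥ xs) + μ j ⬝ᵥ μ j) ∧
        (∀ k, a k ⬝ᵥ xs ≤ b k) ∧ xs ⬝ᵥ xs ≤ xs ⬝ᵥ xs) ∧
      (∀ (x : Fin n → ℝ) (t : ℝ),
        ((∀ i ∈ I, t - 2 * (μ i ⬝ᵥ x) + μ i ⬝ᵥ μ i ≤ (r i) ^ 2) ∧
          (∀ j ∈ J, (r j) ^ 2 ≤ t - 2 * (μ j ⬝ᵥ x) + μ j ⬝ᵥ μ j) ∧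
          (∀ k, a k ⬝ᵥ x ≤ b k) ∧ x ⬝ᵥ x ≤ t) →
        xs ⬝ᵥ ((Q - lmin • (1 : Matrix (Fin n) (Fin n) ℝ)) *ᵥ xs) + c ⬝ᵥ xs
            + lmin * (xs ⬝ᵥ xs) ≤
          x ⬝ᵥ ((Q - lmin • (1 : Matrix (Fin n) (Fin n) ℝ)) *ᵥ x) + c ⬝ᵥ x
            + lmin * t)) := by
  clear hval hIJ
  set M := Q - lmin • (1 : Matrix (Fin n) (Fin n) ℝ) with hMdef
  -- M is symmetric
  have hMsymm : Mᵀ = M := by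
    rw [hMdef, Matrix.transpose_sub, Matrix.transpose_smul, Matrix.transpose_one, hQsymm]
  have hdot : ∀ u w : Fin n → ℝ, u ⬝ᵥ (M *ᵥ w) = (M *ᵥ u) ⬝ᵥ w := by
    intro u w
    rw [Matrix.dotProduct_mulVec, ← Matrix.mulVec_transpose, hMsymm]
  -- objective identity
  have hobj : ∀ z : Fin n → ℝ, z ⬝ᵥ (M *ᵥ z) = z ⬝ᵥ (Q *ᵥ z) - lmin * (z ⬝ᵥ z) := by
    intro z
    have : M *ᵥ z = Q *ᵥ z - lmin • z := by
      rw [hMdef, Matrix.sub_mulVec, Matrix.smul_mulVec, Matrix.one_mulVec]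
    rw [this, dotProduct_sub, dotProduct_smul, smul_eq_mul]
  -- feasibility conversions
  have feasI : ∀ (x : Fin n → ℝ) (i : ι), 0 ≤ r i →
      (Real.sqrt ((x - μ i) ⬝ᵥ (x - μ i)) ≤ r i ↔
        x ⬝ᵥ x - 2 * (μ i ⬝ᵥ x) + μ i ⬝ᵥ μ i ≤ r i ^ 2) := by
    intro x i hri
    rw [← dp_expand]
    exact sqrt_le_iff_sq (dp_nonneg _) hri
  have feasJ : ∀ (x : Fin n → ℝ) (j : ι), 0 ≤ r j →
      (r j ≤ Real.sqrt ((x - μ j) ⬝ᵥ (x - μ j)) ↔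
        r j ^ 2 ≤ x ⬝ᵥ x - 2 * (μ j ⬝ᵥ x) + μ j ⬝ᵥ μ j) := by
    intro x j hrj
    rw [← dp_expand]
    exact le_sqrt_iff_sq (dp_nonneg _) hrj
  constructor
  · -- forward direction
    rintro ⟨⟨hI, hJ, hA⟩, hmin⟩
    -- n ≥ 1
    have hn : 0 < n := by
      by_contra hn0
      have hn0 : n = 0 := by omega
      subst hn0
      have hmem : (lmin + 1) ∈ {c : ℝ | (Q - c • (1 : Matrix (Fin 0) (Fin 0) ℝ)).PosSemidef} := by
        constructor
        · exact Subsingleton.elim _ _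
        · intro x
          rw [show x = 0 from Finsupp.ext fun i => i.elim0]
          simp
      have := hlmin.2 hmem
      linarith
    -- find a vector orthogonal to everything with c ⬝ᵥ v ≤ 0
    obtain ⟨v0, hv0ne, hv0perp⟩ :=
      exists_perp (Submodule.span ℝ (Set.range a ∪ (μ '' ↑I) ∪ (μ '' ↑J)) ⊔
        LinearMap.range M.mulVecLin) (lt_of_le_of_lt hdim (by omega))
    obtain ⟨v, hvne, hperp, hcv⟩ : ∃ v : Fin n → ℝ, v ≠ 0 ∧
        (∀ w ∈ Submodule.span ℝ (Set.range a ∪ (μ '' ↑I) ∪ (μ '' ↑J)) ⊔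
          LinearMap.range M.mulVecLin, w ⬝ᵥ v = 0) ∧ c ⬝ᵥ v ≤ 0 := by
      rcases le_or_gt (c ⬝ᵥ v0) 0 with h | h
      · exact ⟨v0, hv0ne, hv0perp, h⟩
      · refine ⟨-v0, neg_ne_zero.mpr hv0ne, fun w hw => ?_, ?_⟩
        · rw [dotProduct_neg, hv0perp w hw, neg_zero]
        · rw [dotProduct_neg]; linarith
    have hav : ∀ k, a k ⬝ᵥ v = 0 := fun k =>
      hperp _ (Submodule.mem_sup_left (Submodule.subset_span
        (Set.mem_union_left _ (Set.mem_union_left _ ⟨k, rfl⟩))))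
    have hμvI : ∀ i ∈ I, μ i ⬝ᵥ v = 0 := fun i hi =>
      hperp _ (Submodule.mem_sup_left (Submodule.subset_span
        (Set.mem_union_left _ (Set.mem_union_right _ ⟨i, hi, rfl⟩))))
    have hμvJ : ∀ j ∈ J, μ j ⬝ᵥ v = 0 := fun j hj =>
      hperp _ (Submodule.mem_sup_left (Submodule.subset_span
        (Set.mem_union_right _ ⟨j, hj, rfl⟩)))
    have hMv : ∀ u : Fin n → ℝ, (M *ᵥ u) ⬝ᵥ v = 0 := fun u =>
      hperp _ (Submodule.mem_sup_right ⟨u, rfl⟩)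
    have hq : 0 < v ⬝ᵥ v :=
      lt_of_le_of_ne (dp_nonneg v) (Ne.symm (fun h => hvne (dotProduct_self_eq_zero.mp h)))
    constructor
    · refine ⟨fun i hi => (feasI xs i (hr i (Or.inl hi))).mp (hI i hi),
        fun j hj => (feasJ xs j (hr j (Or.inr hj))).mp (hJ j hj), hA, le_refl _⟩
    · rintro x t ⟨hI', hJ', hA', hxt⟩
      set p := x ⬝ᵥ v with hp
      set q := v ⬝ᵥ v with hqdef
      set D := p ^ 2 + q * (t - x ⬝ᵥ x) with hDdef
      have hD : 0 ≤ D := by nlinarith [sq_nonneg p]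
      set s := (-p + Real.sqrt D) / q with hsdef
      have hsq : Real.sqrt D ^ 2 = D := Real.sq_sqrt hD
      have hs0 : 0 ≤ s := by
        have h1 : |p| ≤ Real.sqrt D := by
          rw [← Real.sqrt_sq_eq_abs]
          exact Real.sqrt_le_sqrt (by nlinarith)
        have h2 : p ≤ |p| := le_abs_self p
        apply div_nonneg _ (le_of_lt hq)
        linarith
      have hqs : q * s = Real.sqrt D - p := by
        rw [hsdef]
        field_simp
        ring
      set y := x + s • v with hydef
      -- dot product computations
      have hyμ : ∀ i, μ i ⬝ᵥ v = 0 → μ i ⬝ᵥ y = μ i ⬝ᵥ x := by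
        intro i h
        rw [hydef, dotProduct_add, dotProduct_smul, h, smul_zero, add_zero]
      have hya : ∀ k, a k ⬝ᵥ y = a k ⬝ᵥ x := by
        intro k
        rw [hydef, dotProduct_add, dotProduct_smul, hav k, smul_zero, add_zero]
      have hyy : y ⬝ᵥ y = x ⬝ᵥ x + 2 * s * p + s ^ 2 * q := by
        rw [hydef]
        simp only [add_dotProduct, dotProduct_add, smul_dotProduct,
          dotProduct_smul, smul_eq_mul]
        rw [dotProduct_comm v x]
        rw [← hp, ← hqdef]
        ring
      have key : x ⬝ᵥ x + 2 * s * p + s ^ 2 * q = t := by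
        have h2 : q * (x ⬝ᵥ x + 2 * s * p + s ^ 2 * q) = q * t := by
          linear_combination (q * s + Real.sqrt D + p) * hqs + hsq + hDdef
        exact mul_left_cancel₀ (ne_of_gt hq) h2
      have hyyt : y ⬝ᵥ y = t := by rw [hyy, key]
      -- y is feasible for VTRS
      have hyfeas : ((∀ i ∈ I, Real.sqrt ((y - μ i) ⬝ᵥ (y - μ i)) ≤ r i) ∧
          (∀ j ∈ J, r j ≤ Real.sqrt ((y - μ j) ⬝ᵥ (y - μ j))) ∧
          (∀ k, a k ⬝ᵥ y ≤ b k)) := by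
        refine ⟨fun i hi => ?_, fun j hj => ?_, fun k => ?_⟩
        · rw [feasI y i (hr i (Or.inl hi)), hyyt, hyμ i (hμvI i hi)]
          exact hI' i hi
        · rw [feasJ y j (hr j (Or.inr hj)), hyyt, hyμ j (hμvJ j hj)]
          exact hJ' j hj
        · rw [hya k]; exact hA' k
      have h1 := hmin y hyfeas
      -- compute the objective at y
      have hyM : y ⬝ᵥ (M *ᵥ y) = x ⬝ᵥ (M *ᵥ x) := by
        rw [hydef, Matrix.mulVec_add, Matrix.mulVec_smul]
        simp only [add_dotProduct, dotProduct_add, smul_dotProduct,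
          dotProduct_smul, smul_eq_mul]
        have e1 : v ⬝ᵥ (M *ᵥ x) = 0 := by
          rw [dotProduct_comm]; exact hMv x
        have e2 : x ⬝ᵥ (M *ᵥ v) = 0 := by rw [hdot]; exact hMv x
        have e3 : v ⬝ᵥ (M *ᵥ v) = 0 := by
          rw [dotProduct_comm]; exact hMv v
        rw [e1, e2, e3]
        ring
      have hyc : c ⬝ᵥ y = c ⬝ᵥ x + s * (c ⬝ᵥ v) := by
        rw [hydef, dotProduct_add, dotProduct_smul, smul_eq_mul]
      have hobjy := hobj y
      have hobjxs := hobj xs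
      have hscv : s * (c ⬝ᵥ v) ≤ 0 := mul_nonpos_of_nonneg_of_nonpos hs0 hcv
      -- chain the inequalities
      have h2 : y ⬝ᵥ (Q *ᵥ y) + c ⬝ᵥ y ≤ x ⬝ᵥ (M *ᵥ x) + c ⬝ᵥ x + lmin * t := by
        have := hobj y
        rw [hyM, hyyt] at this
        linarith [this, hyc]
      linarith [h1, h2, hobjxs]
  · -- backward direction
    rintro ⟨⟨hI, hJ, hA, -⟩, hmin⟩
    constructor
    · exact ⟨fun i hi => (feasI xs i (hr i (Or.inl hi))).mpr (hI i hi),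
        fun j hj => (feasJ xs j (hr j (Or.inr hj))).mpr (hJ j hj), hA⟩
    · rintro x ⟨hI', hJ', hA'⟩
      have h1 := hmin x (x ⬝ᵥ x)
        ⟨fun i hi => (feasI x i (hr i (Or.inl hi))).mp (hI' i hi),
          fun j hj => (feasJ x j (hr j (Or.inr hj))).mp (hJ' j hj), hA', le_refl _⟩
      have h2 := hobj x
      have h3 := hobj xs
      linarith
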